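/- For any finite-dimensional vector space V of dimension at least 2 over any field K, the covering number of V equals |K| + 1; that is, V is a union of |K|+1 proper subspaces but not a union of fewer. -/

import Mathlib

universe u

open Cardinal
/-- The covering number of a module: the least cardinal number of proper submodules whose
union is the whole module. -/
noncomputable def coveringNumber (R M : Type u) [Ring R] [AddCommGroup M] [Module R M] :
    Cardinal.{u} :=
  sInf {c : Cardinal.{u} | ∃ S : Set (Submodule R M),
    (∀ N ∈ S, N ≠ ⊤) ∧ (⋃ N ∈ S, (N : Set M)) = Set.univ ∧ #S = c}

section Aux
variable {K V : Type u} [Field K] [AddCommGroup V] [Module K V]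

lemma exists_cover [FiniteDimensional K V] (hV : 2 ≤ Module.finrank K V) :
    ∃ S : Set (Submodule K V), (∀ N ∈ S, N ≠ ⊤) ∧
      (⋃ N ∈ S, (N : Set V)) = Set.univ ∧ #S = #K + 1 := by
  set n := Module.finrank K V with hn
  let b := Module.finBasis K V
  have h0 : 0 < n := by omega
  have h1 : 1 < n := by omega
  set i0 : Fin n := ⟨0, h0⟩ with hi0
  set i1 : Fin n := ⟨1, h1⟩ with hi1
  have hne : i0 ≠ i1 := by simp [hi0, hi1, Fin.ext_iff]
  set f : V →ₗ[K] K := b.coord i0 with hf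
  set g : V →ₗ[K] K := b.coord i1 with hg
  have hf0 : f (b i0) = 1 := by simp [hf]
  have hg0 : g (b i0) = 0 := by
    rw [hg, Module.Basis.coord_apply, Module.Basis.repr_self]
    exact Finsupp.single_eq_of_ne' hne
  have hf1 : f (b i1) = 0 := by
    rw [hf, Module.Basis.coord_apply, Module.Basis.repr_self]
    exact Finsupp.single_eq_of_ne' hne.symm
  have hg1 : g (b i1) = 1 := by simp [hg]
  set N : K → Submodule K V := fun t => LinearMap.ker (f - t • g) with hN
  set Ninf : Submodule K V := LinearMap.ker g with hNinf
  have hmemN : ∀ t v, v ∈ N t ↔ f v - t * g v = 0 := by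
    intro t v
    simp [hN, LinearMap.mem_ker, LinearMap.sub_apply, LinearMap.smul_apply, smul_eq_mul]
  refine ⟨insert Ninf (Set.range N), ?_, ?_, ?_⟩
  · rintro W (rfl | ⟨t, rfl⟩)
    · intro h
      have : b i1 ∈ Ninf := h ▸ Submodule.mem_top
      rw [hNinf, LinearMap.mem_ker, hg1] at this
      exact one_ne_zero this
    · intro h
      have : b i0 ∈ N t := h ▸ Submodule.mem_top
      rw [hmemN, hf0, hg0] at this
      simp at this
  · ext v
    simp only [Set.mem_iUnion, Set.mem_univ, iff_true]
    by_cases hgv : g v = 0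
    · exact ⟨Ninf, Set.mem_insert _ _, hgv⟩
    · refine ⟨N (f v / g v), Set.mem_insert_of_mem _ ⟨_, rfl⟩, ?_⟩
      rw [SetLike.mem_coe, hmemN, div_mul_cancel₀ _ hgv, sub_self]
  · have hNinj : Function.Injective N := by
      intro t s hts
      have hw : (t • b i0 + b i1) ∈ N t := by
        rw [hmemN]
        simp [map_add, map_smul, hf0, hg0, hf1, hg1, smul_eq_mul]
      rw [hts, hmemN] at hw
      simp [map_add, map_smul, hf0, hg0, hf1, hg1, smul_eq_mul] at hw
      linear_combination hw
    have hnotin : Ninf ∉ Set.range N := by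
      rintro ⟨t, ht⟩
      have h2 : b i0 ∈ Ninf := by rw [hNinf, LinearMap.mem_ker]; exact hg0
      rw [← ht] at h2
      rw [hmemN, hf0, hg0] at h2
      simp at h2
    rw [Cardinal.mk_insert hnotin, Cardinal.mk_range_eq _ hNinj]

lemma lower_bound [FiniteDimensional K V]
    (S : Set (Submodule K V)) (hprop : ∀ N ∈ S, N ≠ ⊤)
    (hcov : (⋃ N ∈ S, (N : Set V)) = Set.univ) : #K + 1 ≤ #S := by
  by_contra hlt
  push_neg at hlt
  have hmem : ∀ v : V, ∃ W ∈ S, v ∈ W := by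
    intro v
    have : v ∈ ⋃ N ∈ S, (N : Set V) := hcov ▸ Set.mem_univ v
    simpa using this
  have key : ∀ d : ℕ, ∀ f : Fin d → V, ∃ W ∈ S, ∀ i, f i ∈ W := by
    intro d
    induction d with
    | zero =>
      intro f
      obtain ⟨W, hW, -⟩ := hmem 0
      exact ⟨W, hW, fun i => i.elim0⟩
    | succ d ih =>
      match d, ih with
      | 0, _ =>
        intro fv
        obtain ⟨W, hW, hv⟩ := hmem (fv 0)
        exact ⟨W, hW, fun i => by rw [show i = 0 from Fin.ext (by omega)]; exact hv⟩
      | (e+1), ih =>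
        intro fv
        let g : Option K → Fin (e+1) → V := fun o i =>
          match o with
          | none => fv i.succ
          | some t => if i = 0 then fv 0 + t • fv 1 else fv i.succ
        choose W hWS hWmem using fun o => ih (g o)
        have hninj : ¬ Function.Injective W := by
          intro hinj
          have hinj' : Function.Injective (fun o => (⟨W o, hWS o⟩ : S)) := by
            intro a b hab
            exact hinj (congrArg Subtype.val hab)
          have hle := Cardinal.mk_le_of_injective hinj'
          rw [Cardinal.mk_option] at hle
          exact absurd (hle.trans_lt hlt) (lt_irrefl _)
        obtain ⟨a, b, hab, hneq⟩ := Function.not_injective_iff.mp hninj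
        have hsucc : ∀ (o : Option K) (j : Fin (e+1)), j ≠ 0 → fv j.succ ∈ W o := by
          intro o j hj
          have h := hWmem o j
          cases o with
          | none => exact h
          | some t => simpa [g, hj] using h
        have hsome : ∀ t : K, fv 0 + t • fv 1 ∈ W (some t) := by
          intro t
          have h := hWmem (some t) 0
          simpa [g] using h
        have hnone1 : fv 1 ∈ W none := by
          have h := hWmem none 0
          simpa [g, Fin.succ_zero_eq_one] using h
        -- derive fv 0, fv 1 ∈ W a in each case
        have main : fv 0 ∈ W a ∧ fv 1 ∈ W a := by
          rcases a with _ | t <;> rcases b with _ | s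
          · exact absurd rfl hneq
          · -- a = none, b = some s
            have h1 : fv 1 ∈ W none := hnone1
            have h01 : fv 0 + s • fv 1 ∈ W none := hab ▸ hsome s
            have h0 : fv 0 ∈ W none := by
              have h := sub_mem h01 ((W none).smul_mem s h1)
              simpa using h
            exact ⟨h0, h1⟩
          · -- a = some t, b = none
            have h1 : fv 1 ∈ W (some t) := hab ▸ hnone1
            have h0 : fv 0 ∈ W (some t) := by
              have h := sub_mem (hsome t) ((W (some t)).smul_mem t h1)
              simpa using h
            exact ⟨h0, h1⟩
          · -- a = some t, b = some s, t ≠ s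
            have hts : t ≠ s := fun h => hneq (by rw [h])
            have h01t := hsome t
            have h01s : fv 0 + s • fv 1 ∈ W (some t) := hab ▸ hsome s
            have hsub : (t - s) • fv 1 ∈ W (some t) := by
              have h := sub_mem h01t h01s
              have heq : (fv 0 + t • fv 1) - (fv 0 + s • fv 1) = (t - s) • fv 1 := by
                rw [sub_smul]; abel
              rwa [heq] at h
            have h1 : fv 1 ∈ W (some t) := by
              have h := (W (some t)).smul_mem (t - s)⁻¹ hsub
              rwa [smul_smul, inv_mul_cancel₀ (sub_ne_zero.mpr hts), one_smul] at h
            have h0 : fv 0 ∈ W (some t) := by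
              have h := sub_mem h01t ((W (some t)).smul_mem t h1)
              simpa using h
            exact ⟨h0, h1⟩
        refine ⟨W a, hWS a, ?_⟩
        intro i
        induction i using Fin.cases with
        | zero => exact main.1
        | succ j =>
          by_cases hj : j = 0
          · rw [hj, Fin.succ_zero_eq_one]
            exact main.2
          · exact hsucc a j hj
  obtain ⟨W, hWS, hall⟩ := key (Module.finrank K V) (Module.finBasis K V)
  have htop : ⊤ ≤ W := by
    rw [← (Module.finBasis K V).span_eq]
    exact Submodule.span_le.mpr (Set.range_subset_iff.mpr hall)
  exact hprop W hWS (top_le_iff.mp htop)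

end Aux

/-- For any finite-dimensional vector space `V` of dimension at least 2 over any field
`K`, the covering number of `V` equals `|K| + 1`: `V` is a union of `|K| + 1` proper
subspaces but not a union of fewer. -/
theorem stmt5 (K V : Type u) [Field K] [AddCommGroup V] [Module K V]
    [FiniteDimensional K V] (hV : 2 ≤ Module.finrank K V) :
    coveringNumber K V = #K + 1 ∧
    (∃ S : Set (Submodule K V), (∀ N ∈ S, N ≠ ⊤) ∧
      (⋃ N ∈ S, (N : Set V)) = Set.univ ∧ #S = #K + 1) := by
  obtain ⟨S, h1, h2, h3⟩ := exists_cover hV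
  refine ⟨le_antisymm (csInf_le' ⟨S, h1, h2, h3⟩) ?_, S, h1, h2, h3⟩
  refine le_csInf ⟨#K + 1, S, h1, h2, h3⟩ ?_
  rintro c ⟨T, hT1, hT2, hT3⟩
  exact hT3 ▸ lower_bound T hT1 hT2
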